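/- arXiv:2109.08793 — 3 statements merged into one kernel-verified Lean document; each statement's English description precedes it below -/
import Mathlib

section
/- Define ϖ(x) = (e^x/(1+e^x))·x − ln(1+e^x) for x ∈ ℝ. Then |ϖ(x)| ≤ ln 2 for all x ∈ ℝ. -/
/-- With `ϖ(x) = (eˣ/(1+eˣ))·x − ln(1+eˣ)`, we have `|ϖ(x)| ≤ ln 2` for all `x`. -/
theorem stmt4 (ϖ : ℝ → ℝ)
    (hϖ : ϖ = fun x => (Real.exp x / (1 + Real.exp x)) * x - Real.log (1 + Real.exp x)) :
    ∀ x : ℝ, |ϖ x| ≤ Real.log 2 := by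
  subst hϖ
  intro x
  set u := Real.exp x with hu
  have hu0 : 0 < u := Real.exp_pos x
  have h1 : 0 < 1 + u := by linarith
  set s := u / (1 + u) with hs
  have hs0 : 0 < s := div_pos hu0 h1
  have hs1 : s < 1 := by
    rw [hs, div_lt_one h1]; linarith
  have hlogs : Real.log s = x - Real.log (1 + u) := by
    rw [hs, Real.log_div hu0.ne' h1.ne', hu, Real.log_exp]
  have h1s : 1 - s = 1 / (1 + u) := by
    rw [hs]; field_simp; ring
  have hlog1s : Real.log (1 - s) = -Real.log (1 + u) := by
    rw [h1s, Real.log_div one_ne_zero h1.ne', Real.log_one]; ring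
  have key : s * x - Real.log (1 + u) = -Real.binEntropy s := by
    rw [Real.binEntropy, Real.log_inv, Real.log_inv, hlogs, hlog1s]
    ring
  show |s * x - Real.log (1 + u)| ≤ Real.log 2
  rw [key, abs_neg, abs_of_nonneg (Real.binEntropy_nonneg hs0.le hs1.le)]
  exact Real.binEntropy_le_log_two
end

section
/- Let FZ^sp_τ(q,e,y) = (e^e/(1+e^e))·[e + τ⁻¹max(q−y,0) − q] − ln(1+e^e) + ln(1+e^y). Then FZ^sp_τ(q,e,y) ≥ 0 for all (q,e,y) ∈ ℝ³ and τ ∈ (0,1). -/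
/-- Gradient inequality for softplus, from convexity of `exp`. -/
lemma softplus_grad (a b : ℝ) :
    Real.log (1 + Real.exp a) + (Real.exp a / (1 + Real.exp a)) * (b - a)
      ≤ Real.log (1 + Real.exp b) := by
  have hpa : (0:ℝ) < 1 + Real.exp a := by positivity
  have hpb : (0:ℝ) < 1 + Real.exp b := by positivity
  set σ : ℝ := Real.exp a / (1 + Real.exp a) with hσdef
  have hσ0 : 0 ≤ σ := by positivity
  have hσ1 : σ ≤ 1 := by
    rw [hσdef, div_le_one hpa]; linarith
  have hconv := convexOn_exp.2 (Set.mem_univ (b - a)) (Set.mem_univ 0) hσ0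
    (by linarith : (0:ℝ) ≤ 1 - σ) (by ring)
  simp only [smul_eq_mul, mul_zero, add_zero, Real.exp_zero, mul_one] at hconv
  -- hconv : exp (σ * (b - a)) ≤ σ * exp (b - a) + (1 - σ)
  have hkey : (1 + Real.exp a) * Real.exp (σ * (b - a)) ≤ 1 + Real.exp b := by
    have : (1 + Real.exp a) * (σ * Real.exp (b - a) + (1 - σ)) = 1 + Real.exp b := by
      rw [hσdef]
      field_simp
      rw [← Real.exp_add]
      ring_nf
    nlinarith [Real.exp_pos (σ * (b - a))]
  have := Real.log_le_log (by positivity) hkey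
  rwa [Real.log_mul hpa.ne' (Real.exp_pos _).ne', Real.log_exp] at this

/-- The softplus-specified FZ loss is nonnegative on all of `ℝ³`. -/
theorem stmt8 (τ : ℝ) (hτ : τ ∈ Set.Ioo (0:ℝ) 1) (q e y : ℝ) :
    0 ≤ (Real.exp e / (1 + Real.exp e)) * (e + τ⁻¹ * max (q - y) 0 - q)
        - Real.log (1 + Real.exp e) + Real.log (1 + Real.exp y) := by
  obtain ⟨hτ0, hτ1⟩ := hτ
  set c : ℝ := τ⁻¹ * max (q - y) 0 with hc
  have hτinv : 1 ≤ τ⁻¹ := one_le_inv_iff₀.mpr ⟨hτ0, hτ1.le⟩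
  have hcge : q - y ≤ c := by
    rcases le_or_gt (q - y) 0 with h | h
    · have : 0 ≤ c := by rw [hc]; positivity
      linarith
    · rw [hc, max_eq_left h.le]
      nlinarith
  have h1 := softplus_grad e (q - c)
  have h2 : Real.log (1 + Real.exp (q - c)) ≤ Real.log (1 + Real.exp y) := by
    apply Real.log_le_log (by positivity)
    have := Real.exp_le_exp.mpr (by linarith : q - c ≤ y)
    linarith
  nlinarith [h1, h2]
end

section
/- Suppose Y is a real random variable with distribution F having finite first mean and a unique τ-quantile q_τ, and suppose G₂(t) = ln(1+e^t). Then the expected FZ^sp loss (q,e) ↦ E[FZ^sp_τ(q,e,Y)] is uniquely minimized over {(q,e) : q,e ∈ ℝ} at (q_τ, CTE_Y(τ)), where CTE_Y(τ) = E[Y | Y ≤ q_τ]. -/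
open MeasureTheory Set

noncomputable def sigFZ (x : ℝ) : ℝ := Real.exp x / (1 + Real.exp x)
noncomputable def phiFZ (x : ℝ) : ℝ := Real.log (1 + Real.exp x)

lemma one_add_exp_pos (x : ℝ) : 0 < 1 + Real.exp x := by positivity

lemma sigFZ_pos (x : ℝ) : 0 < sigFZ x :=
  div_pos (Real.exp_pos x) (one_add_exp_pos x)

lemma sigFZ_strictMono : StrictMono sigFZ := by
  intro a b hab
  unfold sigFZ
  rw [div_lt_div_iff₀ (one_add_exp_pos a) (one_add_exp_pos b)]
  have := Real.exp_lt_exp.2 hab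
  nlinarith [Real.exp_pos a, Real.exp_pos b]

lemma hasDerivAt_phiFZ (x : ℝ) : HasDerivAt phiFZ (sigFZ x) x := by
  have h : HasDerivAt (fun x => 1 + Real.exp x) (Real.exp x) x :=
    (Real.hasDerivAt_exp x).const_add 1
  exact h.log (one_add_exp_pos x).ne'

lemma continuous_phiFZ : Continuous phiFZ :=
  (continuous_const.add Real.continuous_exp).log (fun x => (one_add_exp_pos x).ne')

/-- strict convexity tangent line inequality -/
lemma phiFZ_tangent_lt {a b : ℝ} (h : a ≠ b) :
    0 < phiFZ b - phiFZ a - sigFZ a * (b - a) := by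
  rcases h.lt_or_gt with hab | hab
  · obtain ⟨c, hc, hceq⟩ := exists_hasDerivAt_eq_slope phiFZ sigFZ hab
      continuous_phiFZ.continuousOn (fun x _ => hasDerivAt_phiFZ x)
    have h1 : sigFZ a < sigFZ c := sigFZ_strictMono hc.1
    rw [hceq] at h1
    have hba : 0 < b - a := by linarith
    rw [lt_div_iff₀ hba] at h1
    linarith
  · obtain ⟨c, hc, hceq⟩ := exists_hasDerivAt_eq_slope phiFZ sigFZ hab
      continuous_phiFZ.continuousOn (fun x _ => hasDerivAt_phiFZ x)
    have h1 : sigFZ c < sigFZ a := sigFZ_strictMono hc.2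
    rw [hceq] at h1
    have hba : 0 < a - b := by linarith
    rw [div_lt_iff₀ hba] at h1
    linarith

lemma phiFZ_tangent_le (a b : ℝ) :
    0 ≤ phiFZ b - phiFZ a - sigFZ a * (b - a) := by
  rcases eq_or_ne a b with rfl | h
  · simp
  · exact (phiFZ_tangent_lt h).le

lemma int_max (μ : Measure ℝ) [IsProbabilityMeasure μ] (hid : Integrable id μ) (q : ℝ) :
    Integrable (fun y => max (q - y) 0) μ := by
  apply Integrable.mono' ((integrable_const |q|).add hid.abs)
  · exact ((continuous_const.sub continuous_id).max continuous_const).aestronglyMeasurable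
  · filter_upwards with y
    have h1 : max (q - y) 0 ≤ |q| + |y| := by
      apply max_le _ (by positivity)
      calc q - y ≤ |q - y| := le_abs_self _
        _ ≤ |q| + |y| := abs_sub _ _
    have h0 : (0:ℝ) ≤ max (q - y) 0 := le_max_right _ _
    simpa [abs_of_nonneg h0, id] using h1

lemma int_log (μ : Measure ℝ) [IsProbabilityMeasure μ] (hid : Integrable id μ) :
    Integrable (fun y => Real.log (1 + Real.exp y)) μ := by
  apply Integrable.mono' ((integrable_const (Real.log 2)).add hid.abs)
  · exact ((continuous_const.add Real.continuous_exp).log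
      (fun x => (one_add_exp_pos x).ne')).aestronglyMeasurable
  · filter_upwards with y
    have hpos : (0:ℝ) < 1 + Real.exp y := by positivity
    have h0 : (0:ℝ) ≤ Real.log (1 + Real.exp y) :=
      Real.log_nonneg (by nlinarith [Real.exp_pos y])
    have h1 : Real.log (1 + Real.exp y) ≤ Real.log 2 + |y| := by
      have hle : 1 + Real.exp y ≤ 2 * Real.exp |y| := by
        have e1 : Real.exp y ≤ Real.exp |y| := Real.exp_le_exp.2 (le_abs_self y)
        have e2 : (1:ℝ) ≤ Real.exp |y| := Real.one_le_exp (abs_nonneg y)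
        linarith
      calc Real.log (1 + Real.exp y) ≤ Real.log (2 * Real.exp |y|) :=
            Real.log_le_log hpos hle
        _ = Real.log 2 + |y| := by rw [Real.log_mul (by norm_num) (Real.exp_pos _).ne',
            Real.log_exp]
    simpa [abs_of_nonneg h0, id] using h1

lemma quant_key (μ : Measure ℝ) [IsProbabilityMeasure μ] (hid : Integrable id μ)
    (τ : ℝ) (hτ : τ ∈ Set.Ioo (0:ℝ) 1) (qτ : ℝ)
    (hq : (μ (Set.Iic qτ)).toReal = τ)
    (huniq : ∀ q : ℝ, (μ (Set.Iio q)).toReal ≤ τ ∧ τ ≤ (μ (Set.Iic q)).toReal → q = qτ)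
    (q : ℝ) (hne : q ≠ qτ) :
    τ * (q - qτ) < (∫ y, max (q - y) 0 ∂μ) - ∫ y, max (qτ - y) 0 ∂μ := by
  rcases hne.lt_or_gt with hlt | hlt
  · -- q < qτ
    set m := (q + qτ) / 2 with hm
    have hqm : q < m := by simp [hm]; linarith
    have hmq : m < qτ := by simp [hm]; linarith
    -- F(m) < τ
    have hFm : (μ (Set.Iic m)).toReal < τ := by
      by_contra hcon
      push_neg at hcon
      have h1 : (μ (Set.Iio m)).toReal ≤ τ := by
        rw [← hq]
        exact ENNReal.toReal_mono (measure_ne_top μ _)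
          (measure_mono (fun x hx => le_of_lt (lt_trans hx hmq)))
      exact absurd (huniq m ⟨h1, hcon⟩) hmq.ne
    -- measure split
    have hsplit : (μ (Set.Ioc m qτ)).toReal = τ - (μ (Set.Iic m)).toReal := by
      have hu : μ (Set.Iic m) + μ (Set.Ioc m qτ) = μ (Set.Iic qτ) := by
        rw [← measure_union (Iic_disjoint_Ioc le_rfl) measurableSet_Ioc,
          Iic_union_Ioc_eq_Iic hmq.le]
      have := congrArg ENNReal.toReal hu
      rw [ENNReal.toReal_add (measure_ne_top μ _) (measure_ne_top μ _), hq] at this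
      linarith
    -- pointwise inequality
    have hpt : ∀ y, max (qτ - y) 0 ≤ max (q - y) 0
        + ((Set.Iic m).indicator (fun _ => qτ - q) y
          + (Set.Ioc m qτ).indicator (fun _ => qτ - m) y) := by
      intro y
      rcases le_or_gt y m with h1 | h1
      · rw [Set.indicator_of_mem (mem_Iic.2 h1),
          Set.indicator_of_notMem (by simp [mem_Ioc]; intro h; linarith)]
        have : q - y ≤ max (q - y) 0 := le_max_left _ _
        have : qτ - y = max (qτ - y) 0 := (max_eq_left (by linarith)).symm
        rw [← this]
        have := le_max_left (q - y) 0
        linarith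
      · rcases le_or_gt y qτ with h2 | h2
        · rw [Set.indicator_of_notMem (by simp [mem_Iic]; linarith),
            Set.indicator_of_mem (mem_Ioc.2 ⟨h1, h2⟩)]
          have h3 : max (qτ - y) 0 ≤ qτ - m := by
            apply max_le (by linarith) (by linarith)
          have := le_max_right (q - y) 0
          linarith
        · rw [Set.indicator_of_notMem (by simp [mem_Iic]; linarith),
            Set.indicator_of_notMem (by simp [mem_Ioc]; intro h; linarith)]
          have h3 : max (qτ - y) 0 = 0 := max_eq_right (by linarith)
          have := le_max_right (q - y) 0
          linarith
    -- integrate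
    have hint : (∫ y, max (qτ - y) 0 ∂μ) ≤ (∫ y, max (q - y) 0 ∂μ)
        + ((qτ - q) * (μ (Set.Iic m)).toReal + (qτ - m) * (τ - (μ (Set.Iic m)).toReal)) := by
      have hintI1 : Integrable ((Set.Iic m).indicator (fun _ => qτ - q)) μ :=
        (integrable_const _).indicator measurableSet_Iic
      have hintI2 : Integrable ((Set.Ioc m qτ).indicator (fun _ => qτ - m)) μ :=
        (integrable_const _).indicator measurableSet_Ioc
      have hgsum : Integrable (fun y => (Set.Iic m).indicator (fun _ => qτ - q) y
          + (Set.Ioc m qτ).indicator (fun _ => qτ - m) y) μ := hintI1.add hintI2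
      calc (∫ y, max (qτ - y) 0 ∂μ)
          ≤ ∫ y, (max (q - y) 0 + ((Set.Iic m).indicator (fun _ => qτ - q) y
              + (Set.Ioc m qτ).indicator (fun _ => qτ - m) y)) ∂μ :=
            integral_mono (int_max μ hid qτ)
              ((int_max μ hid q).add hgsum) hpt
        _ = (∫ y, max (q - y) 0 ∂μ)
            + ((qτ - q) * (μ (Set.Iic m)).toReal + (qτ - m) * (τ - (μ (Set.Iic m)).toReal)) := by
            rw [integral_add (int_max μ hid q) hgsum,
              integral_add hintI1 hintI2,
              integral_indicator_const _ measurableSet_Iic,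
              integral_indicator_const _ measurableSet_Ioc]
            simp only [measureReal_def]
            rw [hsplit]
            simp only [smul_eq_mul]
            ring
    have hτFm : 0 < τ - (μ (Set.Iic m)).toReal := by linarith
    nlinarith [hint, hτFm, hmq, hqm]
  · -- qτ < q
    set m := (qτ + q) / 2 with hm
    have hqm : qτ < m := by simp [hm]; linarith
    have hmq : m < q := by simp [hm]; linarith
    have hFm : τ < (μ (Set.Iio m)).toReal := by
      by_contra hcon
      push_neg at hcon
      have h1 : τ ≤ (μ (Set.Iic m)).toReal := by
        rw [← hq]
        exact ENNReal.toReal_mono (measure_ne_top μ _)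
          (measure_mono (Iic_subset_Iic.2 hqm.le))
      exact absurd (huniq m ⟨hcon, h1⟩) hqm.ne'
    have hsplit : (μ (Set.Ioo qτ m)).toReal = (μ (Set.Iio m)).toReal - τ := by
      have hu : μ (Set.Iic qτ) + μ (Set.Ioo qτ m) = μ (Set.Iio m) := by
        rw [← measure_union ((Iic_disjoint_Ioc le_rfl).mono_right Ioo_subset_Ioc_self)
          measurableSet_Ioo, Iic_union_Ioo_eq_Iio hqm]
      have := congrArg ENNReal.toReal hu
      rw [ENNReal.toReal_add (measure_ne_top μ _) (measure_ne_top μ _), hq] at this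
      linarith
    have hpt : ∀ y, ((Set.Iic qτ).indicator (fun _ => q - qτ) y
          + (Set.Ioo qτ m).indicator (fun _ => q - m) y) + max (qτ - y) 0
        ≤ max (q - y) 0 := by
      intro y
      rcases le_or_gt y qτ with h1 | h1
      · rw [Set.indicator_of_mem (mem_Iic.2 h1),
          Set.indicator_of_notMem (by simp [mem_Ioo]; intro h; linarith)]
        rw [max_eq_left (by linarith : (0:ℝ) ≤ qτ - y),
          max_eq_left (by linarith : (0:ℝ) ≤ q - y)]
        linarith
      · rcases lt_or_ge y m with h2 | h2
        · rw [Set.indicator_of_notMem (by simp [mem_Iic]; linarith),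
            Set.indicator_of_mem (mem_Ioo.2 ⟨h1, h2⟩)]
          rw [max_eq_right (by linarith : qτ - y ≤ 0),
            max_eq_left (by linarith : (0:ℝ) ≤ q - y)]
          linarith
        · rw [Set.indicator_of_notMem (by simp [mem_Iic]; linarith),
            Set.indicator_of_notMem (by simp [mem_Ioo]; intro h; linarith)]
          rw [max_eq_right (by linarith : qτ - y ≤ 0)]
          have := le_max_right (q - y) 0
          linarith
    have hint : ((q - qτ) * τ + (q - m) * ((μ (Set.Iio m)).toReal - τ))
        + (∫ y, max (qτ - y) 0 ∂μ) ≤ ∫ y, max (q - y) 0 ∂μ := by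
      have hintI1 : Integrable ((Set.Iic qτ).indicator (fun _ => q - qτ)) μ :=
        (integrable_const _).indicator measurableSet_Iic
      have hintI2 : Integrable ((Set.Ioo qτ m).indicator (fun _ => q - m)) μ :=
        (integrable_const _).indicator measurableSet_Ioo
      have hgsum : Integrable (fun y => (Set.Iic qτ).indicator (fun _ => q - qτ) y
          + (Set.Ioo qτ m).indicator (fun _ => q - m) y) μ := hintI1.add hintI2
      calc ((q - qτ) * τ + (q - m) * ((μ (Set.Iio m)).toReal - τ))
            + (∫ y, max (qτ - y) 0 ∂μ)
          = ∫ y, (((Set.Iic qτ).indicator (fun _ => q - qτ) y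
              + (Set.Ioo qτ m).indicator (fun _ => q - m) y) + max (qτ - y) 0) ∂μ := by
            rw [integral_add hgsum (int_max μ hid qτ),
              integral_add hintI1 hintI2,
              integral_indicator_const _ measurableSet_Iic,
              integral_indicator_const _ measurableSet_Ioo]
            simp only [measureReal_def]
            rw [hq, hsplit]
            simp only [smul_eq_mul]
            ring
        _ ≤ ∫ y, max (q - y) 0 ∂μ :=
            integral_mono (hgsum.add (int_max μ hid qτ))
              (int_max μ hid q) hpt
    nlinarith [hint, hFm, hmq]

lemma M_at_q (μ : Measure ℝ) [IsProbabilityMeasure μ] (hid : Integrable id μ) (qτ : ℝ) :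
    (∫ y, max (qτ - y) 0 ∂μ)
      = qτ * (μ (Set.Iic qτ)).toReal - ∫ y in Set.Iic qτ, y ∂μ := by
  have h1 : (fun y => max (qτ - y) 0) = (Set.Iic qτ).indicator (fun y => qτ - y) := by
    funext y
    rcases le_or_gt y qτ with h | h
    · rw [Set.indicator_of_mem (mem_Iic.2 h), max_eq_left (by linarith)]
    · rw [Set.indicator_of_notMem (by simp [mem_Iic]; linarith),
        max_eq_right (by linarith)]
  have hid' : Integrable (fun y : ℝ => y) (μ.restrict (Set.Iic qτ)) := hid.integrableOn
  rw [h1, integral_indicator measurableSet_Iic,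
    integral_sub (integrable_const qτ) hid',
    setIntegral_const, smul_eq_mul, measureReal_def]
  ring

lemma exp_loss (μ : Measure ℝ) [IsProbabilityMeasure μ] (hid : Integrable id μ)
    (τ : ℝ) (FZ : ℝ → ℝ → ℝ → ℝ)
    (hFZ : ∀ q e y, FZ q e y = (Real.exp e / (1 + Real.exp e)) * (e + τ⁻¹ * max (q - y) 0 - q)
        - Real.log (1 + Real.exp e) + Real.log (1 + Real.exp y)) (q e : ℝ) :
    (∫ y, FZ q e y ∂μ) = sigFZ e * (e - q) - phiFZ e
      + (sigFZ e * τ⁻¹) * (∫ y, max (q - y) 0 ∂μ)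
      + ∫ y, Real.log (1 + Real.exp y) ∂μ := by
  have h1 : (fun y => FZ q e y) = fun y => (sigFZ e * (e - q) - phiFZ e)
      + ((sigFZ e * τ⁻¹) * max (q - y) 0 + Real.log (1 + Real.exp y)) := by
    funext y
    rw [hFZ]
    unfold sigFZ phiFZ
    ring
  have hi1 : Integrable (fun y => (sigFZ e * τ⁻¹) * max (q - y) 0) μ :=
    (int_max μ hid q).const_mul _
  have hi2 : Integrable (fun y => (sigFZ e * τ⁻¹) * max (q - y) 0
      + Real.log (1 + Real.exp y)) μ := hi1.add (int_log μ hid)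
  rw [h1, integral_add (integrable_const _) hi2, integral_const,
    integral_add hi1 (int_log μ hid), integral_const_mul]
  simp [measure_univ]
  ring

/-- Strict consistency of the softplus FZ loss: the expected loss is uniquely minimized
at the (unique) `τ`-quantile and the corresponding conditional tail expectation. -/
theorem stmt10 (μ : Measure ℝ) [IsProbabilityMeasure μ]
    (hid : Integrable id μ)
    (τ : ℝ) (hτ : τ ∈ Set.Ioo (0:ℝ) 1)
    (qτ : ℝ)
    (hq : (μ (Set.Iic qτ)).toReal = τ)
    (huniq : ∀ q : ℝ, (μ (Set.Iio q)).toReal ≤ τ ∧ τ ≤ (μ (Set.Iic q)).toReal → q = qτ)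
    (eτ : ℝ) (heτ : eτ = (∫ y in Set.Iic qτ, y ∂μ) / τ)
    (FZ : ℝ → ℝ → ℝ → ℝ)
    (hFZ : ∀ q e y, FZ q e y = (Real.exp e / (1 + Real.exp e)) * (e + τ⁻¹ * max (q - y) 0 - q)
        - Real.log (1 + Real.exp e) + Real.log (1 + Real.exp y)) :
    ∀ q e : ℝ, (q, e) ≠ (qτ, eτ) →
      (∫ y, FZ qτ eτ y ∂μ) < ∫ y, FZ q e y ∂μ := by
  intro q e hne
  have hτ0 : 0 < τ := hτ.1
  have hτne : τ ≠ 0 := ne_of_gt hτ0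
  rw [exp_loss μ hid τ FZ hFZ, exp_loss μ hid τ FZ hFZ]
  set C := ∫ y, Real.log (1 + Real.exp y) ∂μ with hC
  set Mq := ∫ y, max (q - y) 0 ∂μ with hMq
  set Mqt := ∫ y, max (qτ - y) 0 ∂μ with hMqt
  have hMval : Mqt = qτ * τ - τ * eτ := by
    rw [hMqt, M_at_q μ hid qτ, hq, heτ]
    field_simp
  have hiden : (sigFZ e * (e - q) - phiFZ e + (sigFZ e * τ⁻¹) * Mq + C)
      - (sigFZ eτ * (eτ - qτ) - phiFZ eτ + (sigFZ eτ * τ⁻¹) * Mqt + C)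
      = sigFZ e * τ⁻¹ * (Mq - Mqt - τ * (q - qτ))
        + (phiFZ eτ - phiFZ e - sigFZ e * (eτ - e)) := by
    rw [hMval]
    field_simp
    ring
  by_cases hqeq : q = qτ
  · have heneq : e ≠ eτ := by
      intro h
      exact hne (by rw [hqeq, h])
    have hMeq : Mq = Mqt := by rw [hMq, hMqt, hqeq]
    have h2 : 0 < phiFZ eτ - phiFZ e - sigFZ e * (eτ - e) := phiFZ_tangent_lt heneq
    have hD : Mq - Mqt - τ * (q - qτ) = 0 := by rw [hMeq, hqeq]; ring
    rw [hD, mul_zero, zero_add] at hiden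
    linarith
  · have hD : 0 < Mq - Mqt - τ * (q - qτ) := by
      have := quant_key μ hid τ hτ qτ hq huniq q hqeq
      rw [← hMq, ← hMqt] at this
      linarith
    have h1 : 0 < sigFZ e * τ⁻¹ * (Mq - Mqt - τ * (q - qτ)) := by
      have : 0 < sigFZ e * τ⁻¹ := mul_pos (sigFZ_pos e) (inv_pos.2 hτ0)
      exact mul_pos this hD
    have h2 : 0 ≤ phiFZ eτ - phiFZ e - sigFZ e * (eτ - e) := phiFZ_tangent_le e eτ
    nlinarith [hiden, h1, h2]
end
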